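/- Consider the set S of real numbers r such that there exists u : ℝ → ℝ, differentiable on [0,1] with continuous derivative u′ on [0,1], with u(0) = 0, ∫₀¹ u(x)² dx > 0, and r = (∫₀¹ u′(x)² dx − u(1)²) / (∫₀¹ u(x)² dx). Then 0 is the least element of S: every element of S is ≥ 0, and 0 ∈ S (it is attained by u(x) = x). -/
import Mathlib


/-- The infimum of the Rayleigh-type quotient `(∫₀¹ u'² - u(1)²)/∫₀¹ u²` over
nonzero `C¹` functions on `[0,1]` vanishing at `0` equals `0`, i.e.
`C_Ω(-1) = 0` in one dimension; the minimum is attained (e.g. by `u x = x`). -/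
theorem stmt_10 :
    IsLeast {r : ℝ | ∃ u u' : ℝ → ℝ,
      (∀ x ∈ Set.Icc (0:ℝ) 1, HasDerivAt u (u' x) x) ∧
      ContinuousOn u' (Set.Icc 0 1) ∧
      u 0 = 0 ∧
      0 < (∫ x in (0:ℝ)..1, u x ^ 2) ∧
      r = ((∫ x in (0:ℝ)..1, u' x ^ 2) - u 1 ^ 2) / (∫ x in (0:ℝ)..1, u x ^ 2)}
      0 := by
  constructor
  · -- 0 is in the set: take u = id
    refine ⟨id, fun _ => 1, fun x _ => hasDerivAt_id x, continuousOn_const, rfl, ?_, ?_⟩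
    · have : (∫ x in (0:ℝ)..1, x ^ 2) = 1/3 := by
        simp [integral_pow]; norm_num
      simp only [id]
      rw [this]; norm_num
    · simp
  · -- lower bound
    rintro r ⟨u, u', hderiv, hcont, h0, hpos, hr⟩
    have hint : IntervalIntegrable u' MeasureTheory.volume 0 1 := by
      apply ContinuousOn.intervalIntegrable
      rwa [Set.uIcc_of_le (by norm_num : (0:ℝ) ≤ 1)]
    have hftc : (∫ x in (0:ℝ)..1, u' x) = u 1 - u 0 := by
      apply intervalIntegral.integral_eq_sub_of_hasDerivAt
      · intro x hx
        exact hderiv x (by rwa [Set.uIcc_of_le (by norm_num : (0:ℝ) ≤ 1)] at hx)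
      · exact hint
    have hu1 : u 1 = ∫ x in (0:ℝ)..1, u' x := by rw [hftc, h0]; ring
    have hintsq : IntervalIntegrable (fun x => u' x ^ 2) MeasureTheory.volume 0 1 := by
      apply ContinuousOn.intervalIntegrable
      rw [Set.uIcc_of_le (by norm_num : (0:ℝ) ≤ 1)]
      exact hcont.pow 2
    have hintm : IntervalIntegrable (fun x => (u' x - u 1) ^ 2) MeasureTheory.volume 0 1 := by
      apply ContinuousOn.intervalIntegrable
      rw [Set.uIcc_of_le (by norm_num : (0:ℝ) ≤ 1)]
      exact ((hcont.sub continuousOn_const).pow 2)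
    have hexp : (∫ x in (0:ℝ)..1, (u' x - u 1) ^ 2)
        = (∫ x in (0:ℝ)..1, u' x ^ 2) - u 1 ^ 2 := by
      have : ∀ x, (u' x - u 1) ^ 2 = u' x ^ 2 - (2 * u 1) * u' x + u 1 ^ 2 := by
        intro x; ring
      simp_rw [this]
      rw [intervalIntegral.integral_add (hintsq.sub ((hint.const_mul _)))
            intervalIntegrable_const,
          intervalIntegral.integral_sub hintsq (hint.const_mul _),
          intervalIntegral.integral_const_mul, ← hu1]
      simp; ring
    have hnn : 0 ≤ (∫ x in (0:ℝ)..1, (u' x - u 1) ^ 2) :=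
      intervalIntegral.integral_nonneg (by norm_num) (fun x _ => sq_nonneg _)
    rw [hexp] at hnn
    rw [hr]
    exact div_nonneg (by linarith) hpos.le
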